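/- For the 3-qubit modified Hardy conditions with observables as above, the unique (up to phase) unit vector |ψ⟩ orthogonal to span{|φ_0⟩,...,|φ_6⟩} satisfies |⟨ψ|φ_7⟩|² = |α_1α_2α_3|²|β_1β_2β_3|² / (1 − |α_1α_2α_3|²). -/

import Mathlib

/-- The product state `|a⟩|b⟩|c⟩` of three qubits, as an element of `(ℂ²)^⊗3`
modeled by `EuclideanSpace ℂ (Fin 2 × Fin 2 × Fin 2)`. -/
noncomputable def prod3 (a b c : EuclideanSpace ℂ (Fin 2)) :
    EuclideanSpace ℂ (Fin 2 × Fin 2 × Fin 2) :=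
  (WithLp.equiv 2 _).symm (fun p => a p.1 * b p.2.1 * c p.2.2)


local notation "⟪" x ", " y "⟫" => @inner ℂ _ _ x y

lemma inner_prod3 (a b c a' b' c' : EuclideanSpace ℂ (Fin 2)) :
    ⟪prod3 a b c, prod3 a' b' c'⟫ = ⟪a, a'⟫ * ⟪b, b'⟫ * ⟪c, c'⟫ := by
  simp only [prod3, PiLp.inner_apply, WithLp.equiv_symm_apply, WithLp.ofLp_toLp, RCLike.inner_apply,
    Fintype.sum_prod_type, Fin.sum_univ_two, map_mul]
  ring

lemma prod3_apply (a b c : EuclideanSpace ℂ (Fin 2)) (p : Fin 2 × Fin 2 × Fin 2) :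
    prod3 a b c p = a p.1 * b p.2.1 * c p.2.2 := rfl

lemma prod3_tri1 (s' t' s'' t'' : ℂ) (x y0 y1 z0 z1 : EuclideanSpace ℂ (Fin 2)) :
    prod3 x (s' • y0 + t' • y1) (s'' • z0 + t'' • z1) =
      (s' * s'') • prod3 x y0 z0 + (s' * t'') • prod3 x y0 z1 +
      (t' * s'') • prod3 x y1 z0 + (t' * t'') • prod3 x y1 z1 := by
  ext p
  simp [prod3_apply, PiLp.add_apply, PiLp.smul_apply, smul_eq_mul]
  ring

lemma prod3_tri2 (s t s'' t'' : ℂ) (x0 x1 y z0 z1 : EuclideanSpace ℂ (Fin 2)) :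
    prod3 (s • x0 + t • x1) y (s'' • z0 + t'' • z1) =
      (s * s'') • prod3 x0 y z0 + (s * t'') • prod3 x0 y z1 +
      (t * s'') • prod3 x1 y z0 + (t * t'') • prod3 x1 y z1 := by
  ext p
  simp [prod3_apply, PiLp.add_apply, PiLp.smul_apply, smul_eq_mul]
  ring

lemma prod3_tri3 (s t s' t' : ℂ) (x0 x1 y0 y1 z : EuclideanSpace ℂ (Fin 2)) :
    prod3 (s • x0 + t • x1) (s' • y0 + t' • y1) z =
      (s * s') • prod3 x0 y0 z + (s * t') • prod3 x0 y1 z +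
      (t * s') • prod3 x1 y0 z + (t * t') • prod3 x1 y1 z := by
  ext p
  simp [prod3_apply, PiLp.add_apply, PiLp.smul_apply, smul_eq_mul]
  ring

lemma prod3_tri (s t s' t' s'' t'' : ℂ) (x0 x1 y0 y1 z0 z1 : EuclideanSpace ℂ (Fin 2)) :
    prod3 (s • x0 + t • x1) (s' • y0 + t' • y1) (s'' • z0 + t'' • z1) =
      (s * s' * s'') • prod3 x0 y0 z0 + (s * s' * t'') • prod3 x0 y0 z1 +
      (s * t' * s'') • prod3 x0 y1 z0 + (s * t' * t'') • prod3 x0 y1 z1 +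
      (t * s' * s'') • prod3 x1 y0 z0 + (t * s' * t'') • prod3 x1 y0 z1 +
      (t * t' * s'') • prod3 x1 y1 z0 + (t * t' * t'') • prod3 x1 y1 z1 := by
  ext p
  simp [prod3_apply, PiLp.add_apply, PiLp.smul_apply, smul_eq_mul]
  ring

set_option maxHeartbeats 1000000 in
/-- For the 3-qubit modified Hardy conditions, the unique
(up to a phase) unit vector `|ψ⟩` orthogonal to `span{|φ_0⟩, …, |φ_6⟩}` satisfies
`|⟨ψ|φ_7⟩|² = |α_1 α_2 α_3|² |β_1 β_2 β_3|² / (1 − |α_1 α_2 α_3|²)`. -/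
theorem statement8 (v u : Fin 3 → Fin 2 → EuclideanSpace ℂ (Fin 2))
    (hv : ∀ j, Orthonormal ℂ (v j))
    (α β : Fin 3 → ℂ)
    (hnorm : ∀ j, ‖α j‖ ^ 2 + ‖β j‖ ^ 2 = 1)
    (hα : ∀ j, 0 < ‖α j‖ ∧ ‖α j‖ < 1)
    (hβ : ∀ j, 0 < ‖β j‖ ∧ ‖β j‖ < 1)
    (hu0 : ∀ j, u j 0 = α j • v j 0 + β j • v j 1)
    (hu1 : ∀ j, u j 1 = (starRingEnd ℂ) (β j) • v j 0 - (starRingEnd ℂ) (α j) • v j 1) :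
    ∃ ψ : EuclideanSpace ℂ (Fin 2 × Fin 2 × Fin 2), ‖ψ‖ = 1 ∧
      (∀ i : Fin 7,
        (inner ℂ (![prod3 (v 0 1) (v 1 1) (v 2 1),
            prod3 (v 0 0) (u 1 0) (u 2 0),
            prod3 (v 0 0) (u 1 0) (u 2 1),
            prod3 (u 0 0) (v 1 0) (u 2 0),
            prod3 (u 0 1) (v 1 0) (u 2 0),
            prod3 (u 0 0) (u 1 0) (v 2 0),
            prod3 (u 0 0) (u 1 1) (v 2 0)] i) ψ : ℂ) = 0) ∧
      (∀ ψ' : EuclideanSpace ℂ (Fin 2 × Fin 2 × Fin 2), ‖ψ'‖ = 1 →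
        (∀ i : Fin 7,
          (inner ℂ (![prod3 (v 0 1) (v 1 1) (v 2 1),
              prod3 (v 0 0) (u 1 0) (u 2 0),
              prod3 (v 0 0) (u 1 0) (u 2 1),
              prod3 (u 0 0) (v 1 0) (u 2 0),
              prod3 (u 0 1) (v 1 0) (u 2 0),
              prod3 (u 0 0) (u 1 0) (v 2 0),
              prod3 (u 0 0) (u 1 1) (v 2 0)] i) ψ' : ℂ) = 0) →
        ∃ c : ℂ, ‖c‖ = 1 ∧ ψ' = c • ψ) ∧
      ‖(inner ℂ ψ (prod3 (u 0 0) (u 1 0) (u 2 0)) : ℂ)‖ ^ 2 =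
        (‖α 0‖ * ‖α 1‖ * ‖α 2‖) ^ 2 * (‖β 0‖ * ‖β 1‖ * ‖β 2‖) ^ 2 /
          (1 - (‖α 0‖ * ‖α 1‖ * ‖α 2‖) ^ 2) := by
  have hc' : ∀ j, α j * (starRingEnd ℂ) (α j) + β j * (starRingEnd ℂ) (β j) = 1 := by
    intro j
    rw [Complex.mul_conj, Complex.mul_conj]
    norm_cast
    simp only [Complex.normSq_eq_norm_sq]
    exact hnorm j

  have hvv : ∀ (j : Fin 3) (a b : Fin 2), ⟪v j a, v j b⟫ = if a = b then (1:ℂ) else 0 :=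
    fun j => orthonormal_iff_ite.mp (hv j)
  have hu1' : ∀ j, u j 1 = (starRingEnd ℂ) (β j) • v j 0 + (-(starRingEnd ℂ) (α j)) • v j 1 := by
    intro j; rw [hu1 j, sub_eq_add_neg, neg_smul]
  have hc : ∀ j, (starRingEnd ℂ) (α j) * α j + (starRingEnd ℂ) (β j) * β j = 1 := by
    intro j
    rw [RCLike.conj_mul, RCLike.conj_mul]
    norm_cast
    rw [hnorm j]
    norm_num
  have hBne : ∀ j, (starRingEnd ℂ) (β j) ≠ 0 := by
    intro j
    simp only [ne_eq, map_eq_zero]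
    intro h
    have := (hβ j).1
    rw [h] at this; simp at this
  have hNpos : 0 < 1 - (‖α 0‖ * ‖α 1‖ * ‖α 2‖) ^ 2 := by
    have h0 := hα 0; have h1 := hα 1; have h2 := hα 2
    have h01 : ‖α 0‖ * ‖α 1‖ < 1 := by nlinarith [h0.1, h0.2, h1.1, h1.2]
    have habc : ‖α 0‖ * ‖α 1‖ * ‖α 2‖ < 1 := by
      nlinarith [h2.1, h2.2, h01, mul_pos h0.1 h1.1]
    nlinarith [habc, mul_pos (mul_pos h0.1 h1.1) h2.1]
  set ψ0 : EuclideanSpace ℂ (Fin 2 × Fin 2 × Fin 2) :=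
    ((starRingEnd ℂ) (β 0) * (starRingEnd ℂ) (β 1) * (starRingEnd ℂ) (β 2)) • prod3 (v 0 0) (v 1 0) (v 2 0) +
    (-((starRingEnd ℂ) (β 0) * (starRingEnd ℂ) (β 1) * (starRingEnd ℂ) (α 2))) • prod3 (v 0 0) (v 1 0) (v 2 1) +
    (-((starRingEnd ℂ) (β 0) * (starRingEnd ℂ) (α 1) * (starRingEnd ℂ) (β 2))) • prod3 (v 0 0) (v 1 1) (v 2 0) +
    ((starRingEnd ℂ) (β 0) * (starRingEnd ℂ) (α 1) * (starRingEnd ℂ) (α 2)) • prod3 (v 0 0) (v 1 1) (v 2 1) +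
    (-((starRingEnd ℂ) (α 0) * (starRingEnd ℂ) (β 1) * (starRingEnd ℂ) (β 2))) • prod3 (v 0 1) (v 1 0) (v 2 0) +
    ((starRingEnd ℂ) (α 0) * (starRingEnd ℂ) (β 1) * (starRingEnd ℂ) (α 2)) • prod3 (v 0 1) (v 1 0) (v 2 1) +
    ((starRingEnd ℂ) (α 0) * (starRingEnd ℂ) (α 1) * (starRingEnd ℂ) (β 2)) • prod3 (v 0 1) (v 1 1) (v 2 0)
    with hψ0
  have hco000 : ⟪prod3 (v 0 0) (v 1 0) (v 2 0), ψ0⟫ =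
      (starRingEnd ℂ) (β 0) * (starRingEnd ℂ) (β 1) * (starRingEnd ℂ) (β 2) := by
    rw [hψ0]; simp only [inner_add_right, inner_smul_right, inner_prod3, hvv]; norm_num
  have hco001 : ⟪prod3 (v 0 0) (v 1 0) (v 2 1), ψ0⟫ =
      -((starRingEnd ℂ) (β 0) * (starRingEnd ℂ) (β 1) * (starRingEnd ℂ) (α 2)) := by
    rw [hψ0]; simp only [inner_add_right, inner_smul_right, inner_prod3, hvv]; norm_num
  have hco111 : ⟪prod3 (v 0 1) (v 1 1) (v 2 1), ψ0⟫ = 0 := by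
    rw [hψ0]; simp only [inner_add_right, inner_smul_right, inner_prod3, hvv]; norm_num
  have hco010 : ⟪prod3 (v 0 0) (v 1 1) (v 2 0), ψ0⟫ = -((starRingEnd ℂ) (β 0) * (starRingEnd ℂ) (α 1) * (starRingEnd ℂ) (β 2)) := by
    rw [hψ0]; simp only [inner_add_right, inner_smul_right, inner_prod3, hvv]; norm_num
  have hco011 : ⟪prod3 (v 0 0) (v 1 1) (v 2 1), ψ0⟫ = (starRingEnd ℂ) (β 0) * (starRingEnd ℂ) (α 1) * (starRingEnd ℂ) (α 2) := by
    rw [hψ0]; simp only [inner_add_right, inner_smul_right, inner_prod3, hvv]; norm_num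
  have hco100 : ⟪prod3 (v 0 1) (v 1 0) (v 2 0), ψ0⟫ = -((starRingEnd ℂ) (α 0) * (starRingEnd ℂ) (β 1) * (starRingEnd ℂ) (β 2)) := by
    rw [hψ0]; simp only [inner_add_right, inner_smul_right, inner_prod3, hvv]; norm_num
  have hco101 : ⟪prod3 (v 0 1) (v 1 0) (v 2 1), ψ0⟫ = (starRingEnd ℂ) (α 0) * (starRingEnd ℂ) (β 1) * (starRingEnd ℂ) (α 2) := by
    rw [hψ0]; simp only [inner_add_right, inner_smul_right, inner_prod3, hvv]; norm_num
  have hco110 : ⟪prod3 (v 0 1) (v 1 1) (v 2 0), ψ0⟫ = (starRingEnd ℂ) (α 0) * (starRingEnd ℂ) (α 1) * (starRingEnd ℂ) (β 2) := by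
    rw [hψ0]; simp only [inner_add_right, inner_smul_right, inner_prod3, hvv]; norm_num
  have hval : ⟪ψ0, ψ0⟫ =
      (β 0 * (starRingEnd ℂ) (β 0)) * (β 1 * (starRingEnd ℂ) (β 1)) * (β 2 * (starRingEnd ℂ) (β 2)) +
      (β 0 * (starRingEnd ℂ) (β 0)) * (β 1 * (starRingEnd ℂ) (β 1)) * (α 2 * (starRingEnd ℂ) (α 2)) +
      (β 0 * (starRingEnd ℂ) (β 0)) * (α 1 * (starRingEnd ℂ) (α 1)) * (β 2 * (starRingEnd ℂ) (β 2)) +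
      (β 0 * (starRingEnd ℂ) (β 0)) * (α 1 * (starRingEnd ℂ) (α 1)) * (α 2 * (starRingEnd ℂ) (α 2)) +
      (α 0 * (starRingEnd ℂ) (α 0)) * (β 1 * (starRingEnd ℂ) (β 1)) * (β 2 * (starRingEnd ℂ) (β 2)) +
      (α 0 * (starRingEnd ℂ) (α 0)) * (β 1 * (starRingEnd ℂ) (β 1)) * (α 2 * (starRingEnd ℂ) (α 2)) +
      (α 0 * (starRingEnd ℂ) (α 0)) * (α 1 * (starRingEnd ℂ) (α 1)) * (β 2 * (starRingEnd ℂ) (β 2)) := by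
    nth_rewrite 1 [hψ0]
    simp only [inner_add_left, inner_smul_left, map_mul, map_neg, Complex.conj_conj, neg_mul,
      mul_neg, neg_neg]
    linear_combination (β 0 * β 1 * β 2) * hco000 + (-(β 0 * β 1 * α 2)) * hco001 +
      (-(β 0 * α 1 * β 2)) * hco010 + (β 0 * α 1 * α 2) * hco011 +
      (-(α 0 * β 1 * β 2)) * hco100 + (α 0 * β 1 * α 2) * hco101 + (α 0 * α 1 * β 2) * hco110
  have hbr : ∀ j, ‖β j‖ ^ 2 = 1 - ‖α j‖ ^ 2 := fun j => by linarith [hnorm j]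
  have hval2 : ⟪ψ0, ψ0⟫ = (((1 - (‖α 0‖ * ‖α 1‖ * ‖α 2‖) ^ 2 : ℝ)) : ℂ) := by
    rw [hval]
    simp only [Complex.mul_conj]
    norm_cast
    simp only [Complex.normSq_eq_norm_sq]
    rw [hbr 0, hbr 1, hbr 2]
    ring
  have hnψ0 : ‖ψ0‖ ^ 2 = 1 - (‖α 0‖ * ‖α 1‖ * ‖α 2‖) ^ 2 := by
    rw [← inner_self_eq_norm_sq (𝕜 := ℂ), hval2]
    exact Complex.ofReal_re _
  have hψ0pos : 0 < ‖ψ0‖ := by nlinarith [norm_nonneg ψ0, hNpos, hnψ0]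
  set ψ : EuclideanSpace ℂ (Fin 2 × Fin 2 × Fin 2) := ((‖ψ0‖ : ℝ) : ℂ)⁻¹ • ψ0 with hψdef
  have hψnorm : ‖ψ‖ = 1 := by
    rw [hψdef, norm_smul, norm_inv, Complex.norm_real, Real.norm_eq_abs, abs_of_pos hψ0pos,
      inv_mul_cancel₀ (ne_of_gt hψ0pos)]
  have p1 : ⟪prod3 (v 0 0) (u 1 0) (u 2 0), ψ0⟫ = 0 := by
    rw [hu0 1, hu0 2, prod3_tri1]
    simp only [inner_add_left, inner_smul_left, map_mul, map_neg, Complex.conj_conj, neg_mul,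
      mul_neg, neg_neg]
    linear_combination ((starRingEnd ℂ) (α 1) * (starRingEnd ℂ) (α 2)) * hco000 +
      ((starRingEnd ℂ) (α 1) * (starRingEnd ℂ) (β 2)) * hco001 +
      ((starRingEnd ℂ) (β 1) * (starRingEnd ℂ) (α 2)) * hco010 +
      ((starRingEnd ℂ) (β 1) * (starRingEnd ℂ) (β 2)) * hco011
  have p0 : ⟪prod3 (v 0 1) (v 1 1) (v 2 1), ψ0⟫ = 0 := hco111
  have p2 : ⟪prod3 (v 0 0) (u 1 0) (u 2 1), ψ0⟫ = 0 := by
    rw [hu0 1, hu1' 2, prod3_tri1]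
    simp only [inner_add_left, inner_smul_left, map_mul, map_neg, Complex.conj_conj, neg_mul,
      mul_neg, neg_neg]
    linear_combination ((starRingEnd ℂ) (α 1) * β 2) * hco000 + (-((starRingEnd ℂ) (α 1) * α 2)) * hco001 +
      ((starRingEnd ℂ) (β 1) * β 2) * hco010 + (-((starRingEnd ℂ) (β 1) * α 2)) * hco011
  have p3 : ⟪prod3 (u 0 0) (v 1 0) (u 2 0), ψ0⟫ = 0 := by
    rw [hu0 0, hu0 2, prod3_tri2]
    simp only [inner_add_left, inner_smul_left, map_mul, map_neg, Complex.conj_conj, neg_mul,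
      mul_neg, neg_neg]
    linear_combination ((starRingEnd ℂ) (α 0) * (starRingEnd ℂ) (α 2)) * hco000 + ((starRingEnd ℂ) (α 0) * (starRingEnd ℂ) (β 2)) * hco001 +
      ((starRingEnd ℂ) (β 0) * (starRingEnd ℂ) (α 2)) * hco100 + ((starRingEnd ℂ) (β 0) * (starRingEnd ℂ) (β 2)) * hco101
  have p4 : ⟪prod3 (u 0 1) (v 1 0) (u 2 0), ψ0⟫ = 0 := by
    rw [hu1' 0, hu0 2, prod3_tri2]
    simp only [inner_add_left, inner_smul_left, map_mul, map_neg, Complex.conj_conj, neg_mul,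
      mul_neg, neg_neg]
    linear_combination (β 0 * (starRingEnd ℂ) (α 2)) * hco000 + (β 0 * (starRingEnd ℂ) (β 2)) * hco001 +
      (-(α 0 * (starRingEnd ℂ) (α 2))) * hco100 + (-(α 0 * (starRingEnd ℂ) (β 2))) * hco101
  have p5 : ⟪prod3 (u 0 0) (u 1 0) (v 2 0), ψ0⟫ = 0 := by
    rw [hu0 0, hu0 1, prod3_tri3]
    simp only [inner_add_left, inner_smul_left, map_mul, map_neg, Complex.conj_conj, neg_mul,
      mul_neg, neg_neg]
    linear_combination ((starRingEnd ℂ) (α 0) * (starRingEnd ℂ) (α 1)) * hco000 + ((starRingEnd ℂ) (α 0) * (starRingEnd ℂ) (β 1)) * hco010 +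
      ((starRingEnd ℂ) (β 0) * (starRingEnd ℂ) (α 1)) * hco100 + ((starRingEnd ℂ) (β 0) * (starRingEnd ℂ) (β 1)) * hco110
  have p6 : ⟪prod3 (u 0 0) (u 1 1) (v 2 0), ψ0⟫ = 0 := by
    rw [hu0 0, hu1' 1, prod3_tri3]
    simp only [inner_add_left, inner_smul_left, map_mul, map_neg, Complex.conj_conj, neg_mul,
      mul_neg, neg_neg]
    linear_combination ((starRingEnd ℂ) (α 0) * β 1) * hco000 + (-((starRingEnd ℂ) (α 0) * α 1)) * hco010 +
      ((starRingEnd ℂ) (β 0) * β 1) * hco100 + (-((starRingEnd ℂ) (β 0) * α 1)) * hco110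
  have p7 : ⟪prod3 (u 0 0) (u 1 0) (u 2 0), ψ0⟫ =
      (starRingEnd ℂ) (α 0) * (starRingEnd ℂ) (α 1) * (starRingEnd ℂ) (α 2) * ((starRingEnd ℂ) (β 0) * (starRingEnd ℂ) (β 1) * (starRingEnd ℂ) (β 2)) := by
    rw [hu0 0, hu0 1, hu0 2, prod3_tri]
    simp only [inner_add_left, inner_smul_left, map_mul, map_neg, Complex.conj_conj, neg_mul,
      mul_neg, neg_neg]
    linear_combination ((starRingEnd ℂ) (α 0) * (starRingEnd ℂ) (α 1) * (starRingEnd ℂ) (α 2)) * hco000 + ((starRingEnd ℂ) (α 0) * (starRingEnd ℂ) (α 1) * (starRingEnd ℂ) (β 2)) * hco001 +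
      ((starRingEnd ℂ) (α 0) * (starRingEnd ℂ) (β 1) * (starRingEnd ℂ) (α 2)) * hco010 + ((starRingEnd ℂ) (α 0) * (starRingEnd ℂ) (β 1) * (starRingEnd ℂ) (β 2)) * hco011 +
      ((starRingEnd ℂ) (β 0) * (starRingEnd ℂ) (α 1) * (starRingEnd ℂ) (α 2)) * hco100 + ((starRingEnd ℂ) (β 0) * (starRingEnd ℂ) (α 1) * (starRingEnd ℂ) (β 2)) * hco101 +
      ((starRingEnd ℂ) (β 0) * (starRingEnd ℂ) (β 1) * (starRingEnd ℂ) (α 2)) * hco110 + ((starRingEnd ℂ) (β 0) * (starRingEnd ℂ) (β 1) * (starRingEnd ℂ) (β 2)) * hco111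
  have val : ‖⟪ψ, prod3 (u 0 0) (u 1 0) (u 2 0)⟫‖ ^ 2 =
      (‖α 0‖ * ‖α 1‖ * ‖α 2‖) ^ 2 * (‖β 0‖ * ‖β 1‖ * ‖β 2‖) ^ 2 /
        (1 - (‖α 0‖ * ‖α 1‖ * ‖α 2‖) ^ 2) := by
    rw [norm_inner_symm, hψdef, inner_smul_right, p7, norm_mul, norm_inv]
    simp only [norm_mul, RCLike.norm_conj, Complex.norm_real, Real.norm_eq_abs,
      abs_of_pos hψ0pos]
    rw [mul_pow, inv_pow, hnψ0]
    field_simp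
  have o0 : ⟪prod3 (v 0 1) (v 1 1) (v 2 1), ψ⟫ = 0 := by
    rw [hψdef, inner_smul_right, p0, mul_zero]
  have o1 : ⟪prod3 (v 0 0) (u 1 0) (u 2 0), ψ⟫ = 0 := by
    rw [hψdef, inner_smul_right, p1, mul_zero]
  have o2 : ⟪prod3 (v 0 0) (u 1 0) (u 2 1), ψ⟫ = 0 := by
    rw [hψdef, inner_smul_right, p2, mul_zero]
  have o3 : ⟪prod3 (u 0 0) (v 1 0) (u 2 0), ψ⟫ = 0 := by
    rw [hψdef, inner_smul_right, p3, mul_zero]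
  have o4 : ⟪prod3 (u 0 1) (v 1 0) (u 2 0), ψ⟫ = 0 := by
    rw [hψdef, inner_smul_right, p4, mul_zero]
  have o5 : ⟪prod3 (u 0 0) (u 1 0) (v 2 0), ψ⟫ = 0 := by
    rw [hψdef, inner_smul_right, p5, mul_zero]
  have o6 : ⟪prod3 (u 0 0) (u 1 1) (v 2 0), ψ⟫ = 0 := by
    rw [hψdef, inner_smul_right, p6, mul_zero]
  have ho : ∀ i : Fin 7,
      (inner ℂ (![prod3 (v 0 1) (v 1 1) (v 2 1),
          prod3 (v 0 0) (u 1 0) (u 2 0),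
          prod3 (v 0 0) (u 1 0) (u 2 1),
          prod3 (u 0 0) (v 1 0) (u 2 0),
          prod3 (u 0 1) (v 1 0) (u 2 0),
          prod3 (u 0 0) (u 1 0) (v 2 0),
          prod3 (u 0 0) (u 1 1) (v 2 0)] i) ψ : ℂ) = 0 := by
    intro i
    fin_cases i
    · simpa using o0
    · simpa using o1
    · simpa using o2
    · simpa using o3
    · simpa using o4
    · simpa using o5
    · simpa using o6
  have huniq : ∀ ψ' : EuclideanSpace ℂ (Fin 2 × Fin 2 × Fin 2), ‖ψ'‖ = 1 →
      (∀ i : Fin 7,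
        (inner ℂ (![prod3 (v 0 1) (v 1 1) (v 2 1),
            prod3 (v 0 0) (u 1 0) (u 2 0),
            prod3 (v 0 0) (u 1 0) (u 2 1),
            prod3 (u 0 0) (v 1 0) (u 2 0),
            prod3 (u 0 1) (v 1 0) (u 2 0),
            prod3 (u 0 0) (u 1 0) (v 2 0),
            prod3 (u 0 0) (u 1 1) (v 2 0)] i) ψ' : ℂ) = 0) →
      ∃ c : ℂ, ‖c‖ = 1 ∧ ψ' = c • ψ := by
    intro ψ' hψ'norm horth'
    have q0 : ⟪prod3 (v 0 1) (v 1 1) (v 2 1), ψ'⟫ = 0 := by simpa using horth' 0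
    have q1 : ⟪prod3 (v 0 0) (u 1 0) (u 2 0), ψ'⟫ = 0 := by simpa using horth' 1
    have q2 : ⟪prod3 (v 0 0) (u 1 0) (u 2 1), ψ'⟫ = 0 := by simpa using horth' 2
    have q3 : ⟪prod3 (u 0 0) (v 1 0) (u 2 0), ψ'⟫ = 0 := by simpa using horth' 3
    have q4 : ⟪prod3 (u 0 1) (v 1 0) (u 2 0), ψ'⟫ = 0 := by simpa using horth' 4
    have q5 : ⟪prod3 (u 0 0) (u 1 0) (v 2 0), ψ'⟫ = 0 := by simpa using horth' 5
    have q6 : ⟪prod3 (u 0 0) (u 1 1) (v 2 0), ψ'⟫ = 0 := by simpa using horth' 6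
    obtain ⟨x, hxdef⟩ : ∃ x : EuclideanSpace ℂ (Fin 2 × Fin 2 × Fin 2),
        x = ψ' - (inner ℂ ψ ψ' : ℂ) • ψ := ⟨_, rfl⟩
    have hψψ : ⟪ψ, ψ⟫ = 1 := by
      rw [inner_self_eq_norm_sq_to_K, hψnorm]
      norm_num
    have Eq7 : ⟪ψ0, x⟫ = 0 := by
      have h1 : ⟪ψ, x⟫ = 0 := by
        rw [hxdef, inner_sub_right, inner_smul_right, hψψ, mul_one, sub_self]
      rw [hψdef, inner_smul_left, map_inv₀, Complex.conj_ofReal] at h1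
      have hne : ((‖ψ0‖ : ℝ) : ℂ)⁻¹ ≠ 0 :=
        inv_ne_zero (Complex.ofReal_ne_zero.mpr (ne_of_gt hψ0pos))
      exact (mul_eq_zero.mp h1).resolve_left hne
    have O0 : ⟪prod3 (v 0 1) (v 1 1) (v 2 1), x⟫ = 0 := by
      rw [hxdef, inner_sub_right, q0, inner_smul_right, o0]
      ring
    have O1 : ⟪prod3 (v 0 0) (u 1 0) (u 2 0), x⟫ = 0 := by
      rw [hxdef, inner_sub_right, q1, inner_smul_right, o1]
      ring
    have O2 : ⟪prod3 (v 0 0) (u 1 0) (u 2 1), x⟫ = 0 := by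
      rw [hxdef, inner_sub_right, q2, inner_smul_right, o2]
      ring
    have O3 : ⟪prod3 (u 0 0) (v 1 0) (u 2 0), x⟫ = 0 := by
      rw [hxdef, inner_sub_right, q3, inner_smul_right, o3]
      ring
    have O4 : ⟪prod3 (u 0 1) (v 1 0) (u 2 0), x⟫ = 0 := by
      rw [hxdef, inner_sub_right, q4, inner_smul_right, o4]
      ring
    have O5 : ⟪prod3 (u 0 0) (u 1 0) (v 2 0), x⟫ = 0 := by
      rw [hxdef, inner_sub_right, q5, inner_smul_right, o5]
      ring
    have O6 : ⟪prod3 (u 0 0) (u 1 1) (v 2 0), x⟫ = 0 := by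
      rw [hxdef, inner_sub_right, q6, inner_smul_right, o6]
      ring
    rw [hu0 1, hu0 2, prod3_tri1] at O1
    simp only [inner_add_left, inner_smul_left, map_mul, map_neg, Complex.conj_conj, neg_mul,
      mul_neg, neg_neg] at O1
    rw [hu0 1, hu1' 2, prod3_tri1] at O2
    simp only [inner_add_left, inner_smul_left, map_mul, map_neg, Complex.conj_conj, neg_mul,
      mul_neg, neg_neg] at O2
    rw [hu0 0, hu0 2, prod3_tri2] at O3
    simp only [inner_add_left, inner_smul_left, map_mul, map_neg, Complex.conj_conj, neg_mul,
      mul_neg, neg_neg] at O3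
    rw [hu1' 0, hu0 2, prod3_tri2] at O4
    simp only [inner_add_left, inner_smul_left, map_mul, map_neg, Complex.conj_conj, neg_mul,
      mul_neg, neg_neg] at O4
    rw [hu0 0, hu0 1, prod3_tri3] at O5
    simp only [inner_add_left, inner_smul_left, map_mul, map_neg, Complex.conj_conj, neg_mul,
      mul_neg, neg_neg] at O5
    rw [hu0 0, hu1' 1, prod3_tri3] at O6
    simp only [inner_add_left, inner_smul_left, map_mul, map_neg, Complex.conj_conj, neg_mul,
      mul_neg, neg_neg] at O6
    nth_rewrite 1 [hψ0] at Eq7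
    simp only [inner_add_left, inner_smul_left, map_mul, map_neg, Complex.conj_conj, neg_mul,
      mul_neg, neg_neg] at Eq7
    have R1 : (starRingEnd ℂ) (α 1) * (inner ℂ (prod3 (v 0 0) (v 1 0) (v 2 0)) x : ℂ) + (starRingEnd ℂ) (β 1) * (inner ℂ (prod3 (v 0 0) (v 1 1) (v 2 0)) x : ℂ) = 0 := by
      linear_combination α 2 * O1 + (starRingEnd ℂ) (β 2) * O2 -
        ((starRingEnd ℂ) (α 1) * (inner ℂ (prod3 (v 0 0) (v 1 0) (v 2 0)) x : ℂ) + (starRingEnd ℂ) (β 1) * (inner ℂ (prod3 (v 0 0) (v 1 1) (v 2 0)) x : ℂ)) * hc' 2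
    have R2 : (starRingEnd ℂ) (α 1) * (inner ℂ (prod3 (v 0 0) (v 1 0) (v 2 1)) x : ℂ) + (starRingEnd ℂ) (β 1) * (inner ℂ (prod3 (v 0 0) (v 1 1) (v 2 1)) x : ℂ) = 0 := by
      linear_combination β 2 * O1 - (starRingEnd ℂ) (α 2) * O2 -
        ((starRingEnd ℂ) (α 1) * (inner ℂ (prod3 (v 0 0) (v 1 0) (v 2 1)) x : ℂ) + (starRingEnd ℂ) (β 1) * (inner ℂ (prod3 (v 0 0) (v 1 1) (v 2 1)) x : ℂ)) * hc' 2
    have R3 : (starRingEnd ℂ) (α 2) * (inner ℂ (prod3 (v 0 0) (v 1 0) (v 2 0)) x : ℂ) + (starRingEnd ℂ) (β 2) * (inner ℂ (prod3 (v 0 0) (v 1 0) (v 2 1)) x : ℂ) = 0 := by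
      linear_combination α 0 * O3 + (starRingEnd ℂ) (β 0) * O4 -
        ((starRingEnd ℂ) (α 2) * (inner ℂ (prod3 (v 0 0) (v 1 0) (v 2 0)) x : ℂ) + (starRingEnd ℂ) (β 2) * (inner ℂ (prod3 (v 0 0) (v 1 0) (v 2 1)) x : ℂ)) * hc' 0
    have R4 : (starRingEnd ℂ) (α 2) * (inner ℂ (prod3 (v 0 1) (v 1 0) (v 2 0)) x : ℂ) + (starRingEnd ℂ) (β 2) * (inner ℂ (prod3 (v 0 1) (v 1 0) (v 2 1)) x : ℂ) = 0 := by
      linear_combination β 0 * O3 - (starRingEnd ℂ) (α 0) * O4 -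
        ((starRingEnd ℂ) (α 2) * (inner ℂ (prod3 (v 0 1) (v 1 0) (v 2 0)) x : ℂ) + (starRingEnd ℂ) (β 2) * (inner ℂ (prod3 (v 0 1) (v 1 0) (v 2 1)) x : ℂ)) * hc' 0
    have R5 : (starRingEnd ℂ) (α 0) * (inner ℂ (prod3 (v 0 0) (v 1 0) (v 2 0)) x : ℂ) + (starRingEnd ℂ) (β 0) * (inner ℂ (prod3 (v 0 1) (v 1 0) (v 2 0)) x : ℂ) = 0 := by
      linear_combination α 1 * O5 + (starRingEnd ℂ) (β 1) * O6 -
        ((starRingEnd ℂ) (α 0) * (inner ℂ (prod3 (v 0 0) (v 1 0) (v 2 0)) x : ℂ) + (starRingEnd ℂ) (β 0) * (inner ℂ (prod3 (v 0 1) (v 1 0) (v 2 0)) x : ℂ)) * hc' 1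
    have R6 : (starRingEnd ℂ) (α 0) * (inner ℂ (prod3 (v 0 0) (v 1 1) (v 2 0)) x : ℂ) + (starRingEnd ℂ) (β 0) * (inner ℂ (prod3 (v 0 1) (v 1 1) (v 2 0)) x : ℂ) = 0 := by
      linear_combination β 1 * O5 - (starRingEnd ℂ) (α 1) * O6 -
        ((starRingEnd ℂ) (α 0) * (inner ℂ (prod3 (v 0 0) (v 1 1) (v 2 0)) x : ℂ) + (starRingEnd ℂ) (β 0) * (inner ℂ (prod3 (v 0 1) (v 1 1) (v 2 0)) x : ℂ)) * hc' 1
    have hkey : (inner ℂ (prod3 (v 0 0) (v 1 0) (v 2 0)) x : ℂ) * ((α 0 * (starRingEnd ℂ) (α 0) + β 0 * (starRingEnd ℂ) (β 0)) * (α 1 * (starRingEnd ℂ) (α 1) + β 1 * (starRingEnd ℂ) (β 1)) * (α 2 * (starRingEnd ℂ) (α 2) + β 2 * (starRingEnd ℂ) (β 2)) - α 0 * (starRingEnd ℂ) (α 0) * (α 1 * (starRingEnd ℂ) (α 1)) * (α 2 * (starRingEnd ℂ) (α 2))) = 0 := by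
      linear_combination ((starRingEnd ℂ) (β 0) * (starRingEnd ℂ) (β 1) * (starRingEnd ℂ) (β 2)) * Eq7 +
        (α 1 * β 2 * (starRingEnd ℂ) (β 2) * (β 0 * (starRingEnd ℂ) (β 0) + α 0 * (starRingEnd ℂ) (α 0))) * R1 +
        (-(β 0 * α 1 * α 2 * (starRingEnd ℂ) (β 0) * (starRingEnd ℂ) (β 2))) * R2 +
        (β 0 * α 2 * (starRingEnd ℂ) (β 0) * (β 1 * (starRingEnd ℂ) (β 1) + α 1 * (starRingEnd ℂ) (α 1))) * R3 +
        (-(α 0 * β 1 * α 2 * (starRingEnd ℂ) (β 0) * (starRingEnd ℂ) (β 1))) * R4 +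
        (α 0 * β 1 * (starRingEnd ℂ) (β 1) * (β 2 * (starRingEnd ℂ) (β 2) + α 2 * (starRingEnd ℂ) (α 2))) * R5 +
        (-(α 0 * α 1 * β 2 * (starRingEnd ℂ) (β 1) * (starRingEnd ℂ) (β 2))) * R6
    have hX : ((α 0 * (starRingEnd ℂ) (α 0) + β 0 * (starRingEnd ℂ) (β 0)) * (α 1 * (starRingEnd ℂ) (α 1) + β 1 * (starRingEnd ℂ) (β 1)) * (α 2 * (starRingEnd ℂ) (α 2) + β 2 * (starRingEnd ℂ) (β 2)) - α 0 * (starRingEnd ℂ) (α 0) * (α 1 * (starRingEnd ℂ) (α 1)) * (α 2 * (starRingEnd ℂ) (α 2))) ≠ 0 := by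
      have e1 : ((α 0 * (starRingEnd ℂ) (α 0) + β 0 * (starRingEnd ℂ) (β 0)) * (α 1 * (starRingEnd ℂ) (α 1) + β 1 * (starRingEnd ℂ) (β 1)) * (α 2 * (starRingEnd ℂ) (α 2) + β 2 * (starRingEnd ℂ) (β 2)) - α 0 * (starRingEnd ℂ) (α 0) * (α 1 * (starRingEnd ℂ) (α 1)) * (α 2 * (starRingEnd ℂ) (α 2))) = (((1 - (‖α 0‖ * ‖α 1‖ * ‖α 2‖) ^ 2 : ℝ)) : ℂ) := by
        rw [hc' 0, hc' 1, hc' 2]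
        simp only [Complex.mul_conj]
        norm_cast
        simp only [Complex.normSq_eq_norm_sq]
        ring
      rw [e1]
      exact Complex.ofReal_ne_zero.mpr (ne_of_gt hNpos)
    have hd000 : (inner ℂ (prod3 (v 0 0) (v 1 0) (v 2 0)) x : ℂ) = 0 := by
      rcases mul_eq_zero.mp hkey with h | h
      · exact h
      · exact absurd h hX
    have hd001 : (inner ℂ (prod3 (v 0 0) (v 1 0) (v 2 1)) x : ℂ) = 0 := by
      have h := R3; rw [hd000, mul_zero, zero_add] at h
      exact (mul_eq_zero.mp h).resolve_left (hBne 2)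
    have hd010 : (inner ℂ (prod3 (v 0 0) (v 1 1) (v 2 0)) x : ℂ) = 0 := by
      have h := R1; rw [hd000, mul_zero, zero_add] at h
      exact (mul_eq_zero.mp h).resolve_left (hBne 1)
    have hd100 : (inner ℂ (prod3 (v 0 1) (v 1 0) (v 2 0)) x : ℂ) = 0 := by
      have h := R5; rw [hd000, mul_zero, zero_add] at h
      exact (mul_eq_zero.mp h).resolve_left (hBne 0)
    have hd011 : (inner ℂ (prod3 (v 0 0) (v 1 1) (v 2 1)) x : ℂ) = 0 := by
      have h := R2; rw [hd001, mul_zero, zero_add] at h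
      exact (mul_eq_zero.mp h).resolve_left (hBne 1)
    have hd101 : (inner ℂ (prod3 (v 0 1) (v 1 0) (v 2 1)) x : ℂ) = 0 := by
      have h := R4; rw [hd100, mul_zero, zero_add] at h
      exact (mul_eq_zero.mp h).resolve_left (hBne 2)
    have hd110 : (inner ℂ (prod3 (v 0 1) (v 1 1) (v 2 0)) x : ℂ) = 0 := by
      have h := R6; rw [hd010, mul_zero, zero_add] at h
      exact (mul_eq_zero.mp h).resolve_left (hBne 0)
    have hd111 : (inner ℂ (prod3 (v 0 1) (v 1 1) (v 2 1)) x : ℂ) = 0 := O0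
    have hDall : ∀ (i j k : Fin 2), (inner ℂ (prod3 (v 0 i) (v 1 j) (v 2 k)) x : ℂ) = 0 := by
      intro i j k
      fin_cases i <;> fin_cases j <;> fin_cases k <;> assumption
    have honE : Orthonormal ℂ (fun p : Fin 2 × Fin 2 × Fin 2 =>
        prod3 (v 0 p.1) (v 1 p.2.1) (v 2 p.2.2)) := by
      rw [orthonormal_iff_ite]
      rintro ⟨i, j, k⟩ ⟨i', j', k'⟩
      rw [inner_prod3, hvv 0, hvv 1, hvv 2]
      by_cases h1 : i = i' <;> by_cases h2 : j = j' <;> by_cases h3 : k = k' <;>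
        simp [Prod.ext_iff, h1, h2, h3]
    have hcard : Fintype.card (Fin 2 × Fin 2 × Fin 2) =
        Module.finrank ℂ (EuclideanSpace ℂ (Fin 2 × Fin 2 × Fin 2)) := by
      simp [finrank_euclideanSpace]
    have hspan : Submodule.span ℂ (Set.range (fun p : Fin 2 × Fin 2 × Fin 2 =>
        prod3 (v 0 p.1) (v 1 p.2.1) (v 2 p.2.2))) = ⊤ := by
      have h := (basisOfLinearIndependentOfCardEqFinrank honE.linearIndependent hcard).span_eq
      rwa [coe_basisOfLinearIndependentOfCardEqFinrank] at h
    have hx0 : x = 0 := by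
      have hmem : ∀ w ∈ Submodule.span ℂ (Set.range (fun p : Fin 2 × Fin 2 × Fin 2 =>
          prod3 (v 0 p.1) (v 1 p.2.1) (v 2 p.2.2))), (inner ℂ w x : ℂ) = 0 := by
        intro w hw
        induction hw using Submodule.span_induction with
        | mem w hw =>
          obtain ⟨p, rfl⟩ := hw
          exact hDall p.1 p.2.1 p.2.2
        | zero => exact inner_zero_left x
        | add a b _ _ ha hb => rw [inner_add_left, ha, hb, add_zero]
        | smul c a _ ha => rw [inner_smul_left, ha, mul_zero]
      have h := hmem x (by rw [hspan]; exact Submodule.mem_top)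
      exact inner_self_eq_zero.mp h
    have hψ'eq : ψ' = (inner ℂ ψ ψ' : ℂ) • ψ := by
      have := hx0
      rw [hxdef] at this
      exact sub_eq_zero.mp this
    refine ⟨(inner ℂ ψ ψ' : ℂ), ?_, hψ'eq⟩
    have h := hψ'norm
    rw [hψ'eq, norm_smul, hψnorm, mul_one] at h
    exact h
  exact ⟨ψ, hψnorm, ho, huniq, val⟩
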